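/- For every α ∈ [1,2] and every s ≥ 0, one has (1+s)·e^{-αs} - 1 ≥ -e^{α-2}·s. -/

import Mathlib

open Real

theorem stmt_0 (α : ℝ) (hα : α ∈ Set.Icc (1:ℝ) 2) (s : ℝ) (hs : 0 ≤ s) :
    (1 + s) * Real.exp (-α * s) - 1 ≥ -Real.exp (α - 2) * s := by
  obtain ⟨h1, h2⟩ := hα
  -- derivative of f(x) = (1+x)e^{-αx} - 1 + e^{α-2} x is nonneg
  have key : ∀ x : ℝ, 0 ≤ Real.exp (-α * x) * (1 - α * (1 + x)) + Real.exp (α - 2) := by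
    intro x
    have ht : α * (1 + x) - 2 + 1 ≤ Real.exp (α * (1 + x) - 2) := Real.add_one_le_exp _
    have hexp : Real.exp (α * (1 + x) - 2) = Real.exp (α - 2) * Real.exp (α * x) := by
      rw [← Real.exp_add]; ring_nf
    have h0 : Real.exp (α * x) * Real.exp (-α * x) = 1 := by
      rw [← Real.exp_add]; ring_nf; exact Real.exp_zero
    have hpos : 0 < Real.exp (-α * x) := Real.exp_pos _
    nlinarith [Real.exp_pos (α * x), Real.exp_pos (α - 2),
      mul_le_mul_of_nonneg_right (hexp ▸ ht) hpos.le]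
  have hasD : ∀ x : ℝ, HasDerivAt
      (fun x => (1 + x) * Real.exp (-α * x) - 1 + Real.exp (α - 2) * x)
      (Real.exp (-α * x) * (1 - α * (1 + x)) + Real.exp (α - 2)) x := by
    intro x
    have h₁ : HasDerivAt (fun x : ℝ => -α * x) (-α) x := by
      simpa using (hasDerivAt_id x).const_mul (-α)
    have h₂ : HasDerivAt (fun x : ℝ => Real.exp (-α * x)) (Real.exp (-α * x) * (-α)) x := h₁.exp
    have h₃ : HasDerivAt (fun x : ℝ => (1 + x)) 1 x := by
      simpa using (hasDerivAt_id x).const_add 1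
    have h₄ := h₃.mul h₂
    have h₅ : HasDerivAt (fun x : ℝ => Real.exp (α - 2) * x) (Real.exp (α - 2)) x := by
      simpa using (hasDerivAt_id x).const_mul (Real.exp (α - 2))
    have h₆ := (h₄.sub_const 1).add h₅
    refine h₆.congr_deriv ?_
    ring
  have hmono : MonotoneOn (fun x => (1 + x) * Real.exp (-α * x) - 1 + Real.exp (α - 2) * x)
      (Set.Ici (0:ℝ)) := by
    apply monotoneOn_of_deriv_nonneg (convex_Ici 0)
    · exact Continuous.continuousOn (by continuity)
    · intro x hx
      exact (hasD x).differentiableAt.differentiableWithinAt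
    · intro x hx
      rw [(hasD x).deriv]
      exact key x
  have h00 : (0:ℝ) ∈ Set.Ici (0:ℝ) := Set.self_mem_Ici
  have hss : s ∈ Set.Ici (0:ℝ) := Set.mem_Ici.2 hs
  have := hmono h00 hss hs
  simp only [mul_zero, Real.exp_zero, mul_one, add_zero] at this
  nlinarith [this]
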